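/- Let (Ω, μ) be a probability space, 1 ≤ p ≤ ∞ with p ≠ 2, and let φ : Ω → ℂ be a measurable function such that there exist C > 0 and a measurable set E with μ(E) > 0 and |φ(ω)| = C for ω ∈ E, φ(ω) = 0 for ω ∉ E. Then for every bounded measurable f : Ω → ℂ with ∫ f·conj(φ) dμ = 0, one has ‖φ‖_{L^p} ≤ ‖φ + f‖_{L^p}. -/

import Mathlib

open MeasureTheory
open scoped ENNReal

theorem stmt_10 {Ω : Type*} [MeasurableSpace Ω] (μ : Measure Ω) [IsProbabilityMeasure μ]
    (p : ℝ≥0∞) (hp : 1 ≤ p) (hp2 : p ≠ 2)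
    (φ : Ω → ℂ) (hφ : Measurable φ)
    (C : ℝ) (hC : 0 < C) (E : Set Ω) (hE : MeasurableSet E) (hEpos : 0 < μ E)
    (hOn : ∀ ω ∈ E, ‖φ ω‖ = C) (hOff : ∀ ω ∉ E, φ ω = 0)
    (f : Ω → ℂ) (hf : Measurable f) (hfb : ∃ M : ℝ, ∀ ω, ‖f ω‖ ≤ M)
    (horth : ∫ ω, f ω * (starRingEnd ℂ) (φ ω) ∂μ = 0) :
    eLpNorm φ p μ ≤ eLpNorm (φ + f) p μ := by
  obtain ⟨M, hM⟩ := hfb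
  set g : Ω → ℂ := φ + f with hgdef
  have hμEtop : μ E ≠ ∞ := (measure_lt_top μ E).ne
  have hμE0 : μ E ≠ 0 := hEpos.ne'
  have hφb : ∀ ω, ‖φ ω‖ ≤ C := by
    intro ω
    by_cases h : ω ∈ E
    · exact le_of_eq (hOn ω h)
    · simp [hOff ω h, hC.le]
  obtain ⟨ω₀, -⟩ := nonempty_of_measure_ne_zero hμE0
  have hMnn : 0 ≤ M := le_trans (norm_nonneg (f ω₀)) (hM ω₀)
  have hgmeas : Measurable g := hφ.add hf
  have hgb : ∀ ω, ‖g ω‖ ≤ C + M := by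
    intro ω
    simpa [hgdef] using (norm_add_le (φ ω) (f ω)).trans (add_le_add (hφb ω) (hM ω))
  have hgint : Integrable g μ :=
    (integrable_const (C + M)).mono' hgmeas.aestronglyMeasurable (ae_of_all _ hgb)
  have hconj : Measurable fun ω => (starRingEnd ℂ) (φ ω) :=
    RCLike.continuous_conj.measurable.comp hφ
  -- integrability of products
  have hint1 : Integrable (fun ω => (starRingEnd ℂ) (φ ω) * φ ω) μ := by
    refine (integrable_const (C * C)).mono' (hconj.mul hφ).aestronglyMeasurable
      (ae_of_all _ fun ω => ?_)
    rw [norm_mul, RCLike.norm_conj]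
    exact mul_le_mul (hφb ω) (hφb ω) (norm_nonneg _) hC.le
  have hint2 : Integrable (fun ω => f ω * (starRingEnd ℂ) (φ ω)) μ := by
    refine (integrable_const (M * C)).mono' (hf.mul hconj).aestronglyMeasurable
      (ae_of_all _ fun ω => ?_)
    rw [norm_mul, RCLike.norm_conj]
    exact mul_le_mul (hM ω) (hφb ω) (norm_nonneg _) hMnn
  -- value of ∫_E conj φ * g
  have e1 : ∫ ω in E, (starRingEnd ℂ) (φ ω) * φ ω ∂μ = ((C ^ 2 * (μ E).toReal : ℝ) : ℂ) := by
    have h : ∀ ω ∈ E, (starRingEnd ℂ) (φ ω) * φ ω = ((C ^ 2 : ℝ) : ℂ) := by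
      intro ω hω
      rw [mul_comm, Complex.mul_conj]
      norm_cast
      rw [← Complex.sq_norm, hOn ω hω]
    rw [setIntegral_congr_fun hE h, setIntegral_const, Complex.real_smul]
    push_cast
    rw [measureReal_def]
    ring
  have e2 : ∫ ω in E, f ω * (starRingEnd ℂ) (φ ω) ∂μ = 0 := by
    rw [setIntegral_eq_integral_of_forall_compl_eq_zero fun ω hω => by simp [hOff ω hω]]
    exact horth
  have e3 : ∫ ω in E, (starRingEnd ℂ) (φ ω) * g ω ∂μ = ((C ^ 2 * (μ E).toReal : ℝ) : ℂ) := by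
    have h : ∀ ω, (starRingEnd ℂ) (φ ω) * g ω
        = (starRingEnd ℂ) (φ ω) * φ ω + f ω * (starRingEnd ℂ) (φ ω) := by
      intro ω
      simp only [hgdef, Pi.add_apply]
      ring
    simp only [h]
    rw [integral_add hint1.integrableOn hint2.integrableOn, e1, e2, add_zero]
  -- key real inequality
  have key : C * (μ E).toReal ≤ ∫ ω in E, ‖g ω‖ ∂μ := by
    have h1 : C ^ 2 * (μ E).toReal ≤ ∫ ω in E, C * ‖g ω‖ ∂μ := by
      calc C ^ 2 * (μ E).toReal = ‖∫ ω in E, (starRingEnd ℂ) (φ ω) * g ω ∂μ‖ := by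
            rw [e3, Complex.norm_real, Real.norm_of_nonneg (by positivity)]
        _ ≤ ∫ ω in E, ‖(starRingEnd ℂ) (φ ω) * g ω‖ ∂μ := norm_integral_le_integral_norm _
        _ = ∫ ω in E, C * ‖g ω‖ ∂μ := by
            refine setIntegral_congr_fun hE fun ω hω => ?_
            rw [norm_mul, RCLike.norm_conj, ← hOn ω hω]
    rw [integral_const_mul] at h1
    nlinarith [h1]
  -- L¹ lower bound on E
  have hL1 : ENNReal.ofReal C * μ E ≤ eLpNorm g 1 (μ.restrict E) := by
    rw [eLpNorm_one_eq_lintegral_enorm,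
      ← ofReal_integral_norm_eq_lintegral_enorm hgint.restrict]
    calc ENNReal.ofReal C * μ E = ENNReal.ofReal (C * (μ E).toReal) := by
          rw [ENNReal.ofReal_mul hC.le, ENNReal.ofReal_toReal hμEtop]
      _ ≤ ENNReal.ofReal (∫ ω in E, ‖g ω‖ ∂μ) := ENNReal.ofReal_le_ofReal key
  -- Hölder on E
  have holder : eLpNorm g 1 (μ.restrict E)
      ≤ eLpNorm g p (μ.restrict E) * μ E ^ (1 - 1 / p.toReal) := by
    have h := eLpNorm_le_eLpNorm_mul_rpow_measure_univ (μ := μ.restrict E) hp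
      hgmeas.aestronglyMeasurable
    simpa [Measure.restrict_apply_univ] using h
  have hrestr : eLpNorm g p (μ.restrict E) ≤ eLpNorm g p μ :=
    eLpNorm_mono_measure _ Measure.restrict_le_self
  -- upper bound for φ
  have hφbound : eLpNorm φ p μ ≤ μ E ^ (1 / p.toReal) * ENNReal.ofReal C := by
    have hind : φ = E.indicator φ := by
      funext ω
      by_cases h : ω ∈ E <;> simp [Set.indicator, h, hOff]
    calc eLpNorm φ p μ = eLpNorm φ p (μ.restrict E) := by
          conv_lhs => rw [hind]
          exact eLpNorm_indicator_eq_eLpNorm_restrict hE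
      _ ≤ (μ.restrict E) Set.univ ^ p.toReal⁻¹ * ENNReal.ofReal C :=
          eLpNorm_le_of_ae_bound (ae_of_all _ hφb)
      _ = μ E ^ (1 / p.toReal) * ENNReal.ofReal C := by
          rw [Measure.restrict_apply_univ, one_div]
  -- exponent facts
  have hs0 : 0 ≤ 1 / p.toReal := by positivity
  have hs1 : 1 / p.toReal ≤ 1 := by
    by_cases hptop : p = ∞
    · simp [hptop]
    · have : (1 : ℝ) ≤ p.toReal := by
        simpa using ENNReal.toReal_mono hptop hp
      rw [div_le_one (by linarith)]
      linarith
  have hme0 : μ E ^ (1 - 1 / p.toReal) ≠ 0 := by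
    simp [ENNReal.rpow_eq_zero_iff, hμE0, hμEtop]
  have hmetop : μ E ^ (1 - 1 / p.toReal) ≠ ∞ :=
    ENNReal.rpow_ne_top_of_nonneg (by linarith) hμEtop
  -- combine
  have hsplit : μ E = μ E ^ (1 / p.toReal) * μ E ^ (1 - 1 / p.toReal) := by
    rw [← ENNReal.rpow_add _ _ hμE0 hμEtop]
    norm_num
  have main : ENNReal.ofReal C * μ E ^ (1 / p.toReal) ≤ eLpNorm g p μ := by
    rw [← ENNReal.mul_le_mul_iff_left hme0 hmetop, mul_assoc, ← hsplit]
    calc ENNReal.ofReal C * μ E ≤ eLpNorm g 1 (μ.restrict E) := hL1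
      _ ≤ eLpNorm g p (μ.restrict E) * μ E ^ (1 - 1 / p.toReal) := holder
      _ ≤ eLpNorm g p μ * μ E ^ (1 - 1 / p.toReal) := by
          exact mul_le_mul_left hrestr _
  calc eLpNorm φ p μ ≤ μ E ^ (1 / p.toReal) * ENNReal.ofReal C := hφbound
    _ = ENNReal.ofReal C * μ E ^ (1 / p.toReal) := mul_comm _ _
    _ ≤ eLpNorm g p μ := main
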